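/- Let μ, σ : ℝ → ℝ be continuously differentiable functions with σ(θ) > 0 for all θ. Define F(θ) = ∫_{(-∞,0]} (1/σ(θ)) φ((y − μ(θ))/σ(θ)) dy, the probability that a Gaussian random variable with mean μ(θ) and standard deviation σ(θ) is at most 0. Then for every θ₀, F is differentiable at θ₀ and F'(θ₀) = ∫_{(-∞,0]} [ ((y − μ(θ₀))/σ(θ₀)²)·μ'(θ₀) + (((y − μ(θ₀))² − σ(θ₀)²)/σ(θ₀)³)·σ'(θ₀) ] · (1/σ(θ₀)) φ((y − μ(θ₀))/σ(θ₀)) dy. That is, the likelihood-ratio estimator 1{Y ≤ 0} · ∂ log f_θ(Y)/∂θ is an unbiased estimator of the derivative of θ ↦ Pr[Y_θ ≤ 0]. -/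

import Mathlib

open MeasureTheory ProbabilityTheory Real

/-- The standard normal probability density function `φ`. -/
noncomputable def stdGaussianPDF (x : ℝ) : ℝ := gaussianPDFReal 0 1 x

section LRHelpers

open Filter Set Topology Asymptotics

lemma LR.phi_eq : stdGaussianPDF = fun x => (Real.sqrt (2*π))⁻¹ * rexp (-x^2/2) := by
  ext x; simp [stdGaussianPDF, gaussianPDFReal]

lemma LR.phi_integrable : Integrable stdGaussianPDF := integrable_gaussianPDFReal 0 1

lemma LR.cont_exp_half : Continuous (fun x : ℝ => rexp (-x^2/2)) :=
  Real.continuous_exp.comp (((continuous_pow 2).neg).div_const 2)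

lemma LR.phi_cont : Continuous stdGaussianPDF := by
  rw [LR.phi_eq]; exact continuous_const.mul LR.cont_exp_half

lemma LR.phi_nonneg (x : ℝ) : 0 ≤ stdGaussianPDF x := gaussianPDFReal_nonneg 0 1 x

lemma LR.inner_hasDerivAt (x : ℝ) : HasDerivAt (fun x : ℝ => -x^2/2) (-x) x := by
  have := ((hasDerivAt_pow 2 x).neg.div_const 2)
  exact this.congr_deriv (by norm_num; ring)

lemma LR.phi_hasDerivAt (x : ℝ) : HasDerivAt stdGaussianPDF (-x * stdGaussianPDF x) x := by
  rw [LR.phi_eq]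
  simpa [mul_comm, mul_assoc, mul_left_comm] using
    (((LR.inner_hasDerivAt x).exp).const_mul ((Real.sqrt (2*π))⁻¹))

lemma LR.sq_atBot : Tendsto (fun x : ℝ => x^2) atBot atTop := by
  have h1 : Tendsto (fun x : ℝ => |x| ^ 2) atBot atTop :=
    (tendsto_pow_atTop (two_ne_zero)).comp tendsto_abs_atBot_atTop
  simpa [sq_abs] using h1

lemma LR.exp_neg_sq_tendsto : Tendsto (fun x : ℝ => rexp (-x^2/2)) atBot (𝓝 0) := by
  apply Real.tendsto_exp_atBot.comp
  have := (tendsto_neg_atTop_atBot.comp LR.sq_atBot).atBot_div_const (two_pos)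
  simpa [Function.comp] using this

lemma LR.phi_tendsto : Tendsto stdGaussianPDF atBot (𝓝 0) := by
  rw [LR.phi_eq]
  simpa using LR.exp_neg_sq_tendsto.const_mul ((Real.sqrt (2*π))⁻¹)

lemma LR.mul_exp_tendsto_atTop : Tendsto (fun x : ℝ => x * rexp (-x^2/2)) atTop (𝓝 0) := by
  have hlo := rpow_mul_exp_neg_mul_sq_isLittleO_exp_neg (b := 1/2) (by norm_num) 1
  have hbot : Tendsto (fun x : ℝ => -(1/2) * x) atTop atBot := by
    have h1 : Tendsto (fun x : ℝ => x / 2) atTop atTop := tendsto_id.atTop_div_const two_pos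
    have := tendsto_neg_atTop_atBot.comp h1
    apply this.congr; intro x; simp [Function.comp]; ring
  have h0 : Tendsto (fun x : ℝ => rexp (-(1/2) * x)) atTop (𝓝 0) :=
    Real.tendsto_exp_atBot.comp hbot
  have := hlo.isBigO.trans_tendsto h0
  apply this.congr'
  filter_upwards [eventually_ge_atTop (0:ℝ)] with x hx
  rw [Real.rpow_one]
  ring_nf

lemma LR.mul_phi_tendsto : Tendsto (fun x : ℝ => x * stdGaussianPDF x) atBot (𝓝 0) := by
  rw [LR.phi_eq]
  have h := (LR.mul_exp_tendsto_atTop.comp tendsto_neg_atBot_atTop).neg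
  rw [neg_zero] at h
  have h2 : Tendsto (fun x : ℝ => x * rexp (-x^2/2)) atBot (𝓝 0) := by
    apply h.congr
    intro x
    simp [Function.comp, neg_sq]
  have h3 := h2.const_mul ((Real.sqrt (2*π))⁻¹)
  rw [mul_zero] at h3
  apply h3.congr
  intro x; simp; ring

lemma LR.aux_mul_exp_le_one (t : ℝ) : t * rexp (-t) ≤ 1 := by
  have h1 : t ≤ rexp t := (Real.add_one_le_exp t).trans' (by linarith)
  calc t * rexp (-t) ≤ rexp t * rexp (-t) :=
        mul_le_mul_of_nonneg_right h1 (Real.exp_pos _).le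
    _ = 1 := by rw [← Real.exp_add]; simp

lemma LR.integrable_mul_exp_half : Integrable (fun x : ℝ => x * rexp (-x^2/2)) := by
  have h := integrable_mul_exp_neg_mul_sq (b := 1/2) (by norm_num : (0:ℝ) < 1/2)
  apply h.congr' (continuous_id'.mul LR.cont_exp_half).aestronglyMeasurable (ae_of_all _ _)
  intro x; simp only [Pi.mul_apply]; ring_nf

lemma LR.sq_mul_exp_bound (x : ℝ) : ‖x^2 * rexp (-x^2/2)‖ ≤ 4 * rexp (-(1/4) * x^2) := by
  have h1 : x^2/4 * rexp (-(x^2/4)) ≤ 1 := LR.aux_mul_exp_le_one _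
  have heq : x^2 * rexp (-x^2/2) = 4 * (x^2/4 * rexp (-(x^2/4))) * rexp (-(1/4) * x^2) := by
    rw [show (-x^2/2 : ℝ) = (-(x^2/4)) + (-(1/4)*x^2) by ring, Real.exp_add]
    ring
  rw [norm_of_nonneg (by positivity), heq]
  have h2 : (0:ℝ) ≤ rexp (-(1/4) * x^2) := (Real.exp_pos _).le
  nlinarith [mul_nonneg (mul_nonneg (by norm_num : (0:ℝ) ≤ (4:ℝ)⁻¹) (sq_nonneg x))
    (Real.exp_pos (-(x^2/4))).le]

lemma LR.integrable_sq_mul_exp_half : Integrable (fun x : ℝ => x^2 * rexp (-x^2/2)) := by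
  have hb : Integrable (fun x : ℝ => 4 * rexp (-(1/4) * x^2)) :=
    (integrable_exp_neg_mul_sq (by norm_num : (0:ℝ) < 1/4)).const_mul 4
  exact hb.mono' ((continuous_pow 2).mul LR.cont_exp_half).aestronglyMeasurable
    (ae_of_all _ LR.sq_mul_exp_bound)

lemma LR.integrable_mul_phi : Integrable (fun x : ℝ => x * stdGaussianPDF x) := by
  rw [LR.phi_eq]
  exact (LR.integrable_mul_exp_half.const_mul ((Real.sqrt (2*π))⁻¹)).congr
    (ae_of_all _ fun x => by ring)

lemma LR.integrable_sq_mul_phi : Integrable (fun x : ℝ => x^2 * stdGaussianPDF x) := by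
  rw [LR.phi_eq]
  exact (LR.integrable_sq_mul_exp_half.const_mul ((Real.sqrt (2*π))⁻¹)).congr
    (ae_of_all _ fun x => by ring)

/-- The standard normal CDF. -/
noncomputable def LR.Phi (x : ℝ) : ℝ := ∫ t in Iic x, stdGaussianPDF t

lemma LR.Phi_hasDerivAt (x : ℝ) : HasDerivAt LR.Phi (stdGaussianPDF x) x := by
  have key : ∀ y : ℝ, LR.Phi y = LR.Phi 0 + ∫ t in (0:ℝ)..y, stdGaussianPDF t := by
    intro y
    rw [← intervalIntegral.integral_Iic_sub_Iic (LR.phi_integrable.integrableOn)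
      (LR.phi_integrable.integrableOn)]
    simp [LR.Phi]
  rw [show LR.Phi = fun y => LR.Phi 0 + ∫ t in (0:ℝ)..y, stdGaussianPDF t from funext key]
  exact (intervalIntegral.integral_hasDerivAt_right
    (LR.phi_integrable.intervalIntegrable)
    (LR.phi_cont.stronglyMeasurable.stronglyMeasurableAtFilter)
    LR.phi_cont.continuousAt).const_add (LR.Phi 0)

lemma LR.Phi_tendsto : Tendsto LR.Phi atBot (𝓝 0) := by
  have h : Tendsto (fun x => ∫ t, (Iic x).indicator stdGaussianPDF t) atBot
      (𝓝 (∫ t : ℝ, (0:ℝ))) := by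
    apply tendsto_integral_filter_of_dominated_convergence stdGaussianPDF
    · exact Eventually.of_forall fun x =>
        (LR.phi_cont.aestronglyMeasurable.indicator measurableSet_Iic)
    · refine Eventually.of_forall fun x => ae_of_all _ fun t => ?_
      calc ‖(Iic x).indicator stdGaussianPDF t‖ ≤ ‖stdGaussianPDF t‖ :=
            norm_indicator_le_norm_self _ _
        _ = stdGaussianPDF t := norm_of_nonneg (LR.phi_nonneg t)
    · exact LR.phi_integrable
    · refine ae_of_all _ fun t => ?_
      apply tendsto_const_nhds.congr'
      filter_upwards [eventually_lt_atBot t] with x hx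
      exact (Set.indicator_of_notMem (by simpa using not_le.mpr hx) _).symm
  simp only [integral_zero] at h
  apply h.congr
  intro x
  exact integral_indicator measurableSet_Iic

lemma LR.affine_atBot (m : ℝ) {s : ℝ} (hs : 0 < s) :
    Tendsto (fun y : ℝ => (y - m)/s) atBot atBot := by
  have h1 : Tendsto (fun y : ℝ => y + (-m)) atBot atBot :=
    tendsto_atBot_add_const_right _ _ tendsto_id
  have := h1.atBot_div_const hs
  simpa [sub_eq_add_neg] using this

lemma LR.inner_affine_hasDerivAt (m s y : ℝ) :
    HasDerivAt (fun y : ℝ => (y - m)/s) (1/s) y :=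
  ((hasDerivAt_id y).sub_const m).div_const s

lemma LR.F_eq (m : ℝ) {s : ℝ} (hs : 0 < s) :
    ∫ y in Iic (0:ℝ), (1/s) * stdGaussianPDF ((y - m)/s) = LR.Phi ((0 - m)/s) := by
  have h := integral_Iic_of_hasDerivAt_of_tendsto'
    (f := fun y : ℝ => LR.Phi ((y - m)/s))
    (f' := fun y : ℝ => (1/s) * stdGaussianPDF ((y - m)/s)) (a := 0)
    (fun y _ => by
      have h1 := (LR.Phi_hasDerivAt ((y - m)/s)).comp y (LR.inner_affine_hasDerivAt m s y)
      exact h1.congr_deriv (by ring))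
    ((((LR.phi_integrable.comp_div hs.ne').comp_sub_right m).const_mul (1/s)).integrableOn)
    (LR.Phi_tendsto.comp (LR.affine_atBot m hs))
  rw [h, sub_zero]

end LRHelpers

/-- Unbiasedness of the likelihood-ratio estimator: if `μ, σ : ℝ → ℝ` are continuously
differentiable with `σ > 0`, and `F(θ) = Pr[Y_θ ≤ 0] = ∫_{(-∞,0]} (1/σ θ) φ((y − μ θ)/σ θ) dy`,
then `F` is differentiable at every `θ₀` with derivative given by integrating the score
function against the density over `(-∞, 0]`. -/
theorem lr_estimator_unbiased (μ σ : ℝ → ℝ)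
    (hμ : ContDiff ℝ 1 μ) (hσ : ContDiff ℝ 1 σ) (hσpos : ∀ θ, 0 < σ θ) (θ₀ : ℝ) :
    HasDerivAt (fun θ => ∫ y in Set.Iic (0 : ℝ), (1 / σ θ) * stdGaussianPDF ((y - μ θ) / σ θ))
      (∫ y in Set.Iic (0 : ℝ),
        (((y - μ θ₀) / (σ θ₀) ^ 2) * deriv μ θ₀ +
          (((y - μ θ₀) ^ 2 - (σ θ₀) ^ 2) / (σ θ₀) ^ 3) * deriv σ θ₀) *
          ((1 / σ θ₀) * stdGaussianPDF ((y - μ θ₀) / σ θ₀))) θ₀ := by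
  have hs : 0 < σ θ₀ := hσpos θ₀
  have hs0 : σ θ₀ ≠ 0 := hs.ne'
  set m := μ θ₀ with hm
  set s := σ θ₀ with hs'
  set a := deriv μ θ₀ with ha
  set b := deriv σ θ₀ with hb
  -- rewrite the function as Φ ∘ affine
  have hF : (fun θ => ∫ y in Set.Iic (0 : ℝ), (1 / σ θ) * stdGaussianPDF ((y - μ θ) / σ θ))
      = fun θ => LR.Phi ((0 - μ θ) / σ θ) := funext fun θ => LR.F_eq (μ θ) (hσpos θ)
  rw [hF]
  -- derivative of the composed map
  have hμd : HasDerivAt μ a θ₀ := ((hμ.differentiable one_ne_zero) θ₀).hasDerivAt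
  have hσd : HasDerivAt σ b θ₀ := ((hσ.differentiable one_ne_zero) θ₀).hasDerivAt
  have hc : HasDerivAt (fun θ => (0 - μ θ) / σ θ)
      (((-a) * s - (0 - m) * b) / s ^ 2) θ₀ := (hμd.const_sub 0).div hσd hs0
  have hDeriv : HasDerivAt (fun θ => LR.Phi ((0 - μ θ) / σ θ))
      (stdGaussianPDF ((0 - m) / s) * (((-a) * s - (0 - m) * b) / s ^ 2)) θ₀ :=
    (LR.Phi_hasDerivAt _).comp θ₀ hc
  -- evaluate the RHS integral
  have hval : ∫ y in Set.Iic (0 : ℝ),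
      (((y - m) / s ^ 2) * a + (((y - m) ^ 2 - s ^ 2) / s ^ 3) * b) *
        ((1 / s) * stdGaussianPDF ((y - m) / s))
      = stdGaussianPDF ((0 - m) / s) * (((-a) * s - (0 - m) * b) / s ^ 2) := by
    -- antiderivative H
    set H : ℝ → ℝ := fun y => (-(a / s)) * stdGaussianPDF ((y - m)/s)
      - (b / s) * (((y - m)/s) * stdGaussianPDF ((y - m)/s)) with hH
    have hderiv : ∀ y ∈ Set.Iic (0:ℝ), HasDerivAt H
        ((((y - m) / s ^ 2) * a + (((y - m) ^ 2 - s ^ 2) / s ^ 3) * b) *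
          ((1 / s) * stdGaussianPDF ((y - m) / s))) y := by
      intro y _
      have inner := LR.inner_affine_hasDerivAt m s y
      have h1 : HasDerivAt (fun y => stdGaussianPDF ((y - m)/s))
          ((-((y - m)/s) * stdGaussianPDF ((y - m)/s)) * (1/s)) y :=
        (LR.phi_hasDerivAt ((y - m)/s)).comp y inner
      have h2 := inner.mul h1
      have h3 := (h1.const_mul (-(a / s))).sub (h2.const_mul (b / s))
      refine h3.congr_deriv ?_
      field_simp
      ring
    have hInt : MeasureTheory.IntegrableOn (fun y =>
        (((y - m) / s ^ 2) * a + (((y - m) ^ 2 - s ^ 2) / s ^ 3) * b) *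
          ((1 / s) * stdGaussianPDF ((y - m) / s))) (Set.Iic (0:ℝ)) := by
      have hG : MeasureTheory.Integrable (fun w : ℝ =>
          ((w / s) * a + ((w ^ 2 - 1) / s) * b) * ((1 / s) * stdGaussianPDF w)) := by
        have base : MeasureTheory.Integrable (fun w : ℝ =>
            (a / s ^ 2) * (w * stdGaussianPDF w) +
              ((b / s ^ 2) * (w ^ 2 * stdGaussianPDF w) + (-(b / s ^ 2)) * stdGaussianPDF w)) :=
          (LR.integrable_mul_phi.const_mul _).add
            ((LR.integrable_sq_mul_phi.const_mul _).add (LR.phi_integrable.const_mul _))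
        exact base.congr (MeasureTheory.ae_of_all _ fun w => by field_simp; ring)
      have hcomp := (hG.comp_div hs0).comp_sub_right m
      exact (hcomp.congr (MeasureTheory.ae_of_all _ fun y => by field_simp)).integrableOn
    have htend : Filter.Tendsto H Filter.atBot (nhds 0) := by
      have hK : Filter.Tendsto (fun w : ℝ =>
          (-(a / s)) * stdGaussianPDF w - (b / s) * (w * stdGaussianPDF w))
          Filter.atBot (nhds 0) := by
        have := (LR.phi_tendsto.const_mul (-(a / s))).sub (LR.mul_phi_tendsto.const_mul (b / s))
        simpa using this
      exact hK.comp (LR.affine_atBot m hs)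
    have := integral_Iic_of_hasDerivAt_of_tendsto' hderiv hInt htend
    rw [this, sub_zero, hH]
    field_simp
  rw [hval]
  exact hDeriv
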